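/- arXiv:1402.5376 — 8 statements merged into one kernel-verified Lean document; each statement's English description precedes it below -/
import Mathlib

section
/- For every θ ∈ [π/3, 2π/3], all five weights u₁(θ), u₂(θ), v(θ), w₁(θ), w₂(θ) given by the explicit formulas of Theorem 1 are nonnegative. -/
open Real

theorem stmt_4 (θ : ℝ) (hθ : θ ∈ Set.Icc (π/3) (2*π/3)) :
    let D : ℝ := Real.sin (5*π/4 + 3*θ/8) * Real.sin (5*π/8 - 3*θ/8)
    let u₁ : ℝ := Real.sin (5*π/4) * Real.sin (5*π/8 + 3*θ/8) / D
    let u₂ : ℝ := Real.sin (5*π/4) * Real.sin (3*θ/8) / D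
    let v : ℝ := Real.sin (5*π/8 + 3*θ/8) * Real.sin (-(3*θ/8)) / D
    let w₁ : ℝ := Real.sin (5*π/8 + 3*θ/8) * Real.sin (5*π/4 - 3*θ/8) / D
    let w₂ : ℝ := Real.sin (15*π/8 + 3*θ/8) * Real.sin (-(3*θ/8)) / D
    0 ≤ u₁ ∧ 0 ≤ u₂ ∧ 0 ≤ v ∧ 0 ≤ w₁ ∧ 0 ≤ w₂ := by
  obtain ⟨h1, h2⟩ := hθ
  have hπ : (0:ℝ) < π := Real.pi_pos
  intro D u₁ u₂ v w₁ w₂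
  -- sign facts
  have hs1 : Real.sin (5*π/4 + 3*θ/8) < 0 := by
    have : (5*π/4 + 3*θ/8) = (π/4 + 3*θ/8) + π := by ring
    rw [this, Real.sin_add_pi]
    have : 0 < Real.sin (π/4 + 3*θ/8) :=
      Real.sin_pos_of_pos_of_lt_pi (by linarith) (by linarith)
    linarith
  have hs2 : 0 < Real.sin (5*π/8 - 3*θ/8) :=
    Real.sin_pos_of_pos_of_lt_pi (by linarith) (by linarith)
  have hD : D < 0 := mul_neg_of_neg_of_pos hs1 hs2
  have hs3 : Real.sin (5*π/4) < 0 := by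
    have : (5*π/4 : ℝ) = π/4 + π := by ring
    rw [this, Real.sin_add_pi]
    have : 0 < Real.sin (π/4) :=
      Real.sin_pos_of_pos_of_lt_pi (by linarith) (by linarith)
    linarith
  have hs4 : 0 < Real.sin (5*π/8 + 3*θ/8) :=
    Real.sin_pos_of_pos_of_lt_pi (by linarith) (by linarith)
  have hs5 : 0 < Real.sin (3*θ/8) :=
    Real.sin_pos_of_pos_of_lt_pi (by linarith) (by linarith)
  have hs6 : Real.sin (-(3*θ/8)) ≤ 0 := by
    rw [Real.sin_neg]; linarith
  have hs7 : Real.sin (5*π/4 - 3*θ/8) ≤ 0 := by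
    have : (5*π/4 - 3*θ/8) = (π/4 - 3*θ/8) + π := by ring
    rw [this, Real.sin_add_pi]
    have : 0 ≤ Real.sin (π/4 - 3*θ/8) :=
      Real.sin_nonneg_of_nonneg_of_le_pi (by linarith) (by linarith)
    linarith
  have hs8 : 0 ≤ Real.sin (15*π/8 + 3*θ/8) := by
    have : (15*π/8 + 3*θ/8) = (3*θ/8 - π/8) + 2*π := by ring
    rw [this, Real.sin_add_two_pi]
    exact Real.sin_nonneg_of_nonneg_of_le_pi (by linarith) (by linarith)
  refine ⟨?_, ?_, ?_, ?_, ?_⟩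
  · exact div_nonneg_of_nonpos (by nlinarith) hD.le
  · exact div_nonneg_of_nonpos (by nlinarith) hD.le
  · exact div_nonneg_of_nonpos (by nlinarith) hD.le
  · exact div_nonneg_of_nonpos (by nlinarith) hD.le
  · exact div_nonneg_of_nonpos (by nlinarith) hD.le
end

section
/- For every θ ∈ [π/3, 2π/3], the weights of Theorem 1 satisfy u₁(θ)² ≥ w₁(θ). -/
open Real

theorem stmt_5 (θ : ℝ) (hθ : θ ∈ Set.Icc (π/3) (2*π/3)) :
    let D : ℝ := Real.sin (5*π/4 + 3*θ/8) * Real.sin (5*π/8 - 3*θ/8)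
    let u₁ : ℝ := Real.sin (5*π/4) * Real.sin (5*π/8 + 3*θ/8) / D
    let w₁ : ℝ := Real.sin (5*π/8 + 3*θ/8) * Real.sin (5*π/4 - 3*θ/8) / D
    u₁^2 ≥ w₁ := by
  intro D u₁ w₁
  obtain ⟨h1, h2⟩ := hθ
  have hπ := Real.pi_pos
  set x : ℝ := 3*θ/8 with hx
  have hx1 : π/8 ≤ x := by rw [hx]; linarith
  have hx2 : x ≤ π/4 := by rw [hx]; linarith
  -- rewrite all the shifted sines
  have e1 : Real.sin (5*π/4 + x) = -(Real.sin (π/4 + x)) := by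
    rw [show 5*π/4 + x = (π/4 + x) + π by ring, Real.sin_add_pi]
  have e2 : Real.sin (5*π/4 - x) = -(Real.sin (π/4 - x)) := by
    rw [show 5*π/4 - x = (π/4 - x) + π by ring, Real.sin_add_pi]
  have e3 : Real.sin (5*π/8 + x) = Real.cos (π/8 + x) := by
    rw [show 5*π/8 + x = (π/8 + x) + π/2 by ring, Real.sin_add_pi_div_two]
  have e4 : Real.sin (5*π/8 - x) = Real.cos (π/8 - x) := by
    rw [show 5*π/8 - x = (π/8 - x) + π/2 by ring, Real.sin_add_pi_div_two]
  have e5 : Real.sin (5*π/4) = -(Real.sqrt 2 / 2) := by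
    rw [show 5*π/4 = π/4 + π by ring, Real.sin_add_pi, Real.sin_pi_div_four]
  -- positivity facts
  have hs : 0 < Real.sin x := Real.sin_pos_of_pos_of_lt_pi (by linarith) (by linarith)
  have hc : 0 < Real.cos x := Real.cos_pos_of_mem_Ioo ⟨by linarith, by linarith⟩
  have hsx : 0 ≤ Real.sin (x - π/8) := Real.sin_nonneg_of_nonneg_of_le_pi (by linarith) (by linarith)
  have hcp : 0 < Real.cos (π/8 + x) := Real.cos_pos_of_mem_Ioo ⟨by linarith, by linarith⟩
  have hA : 0 < Real.sin (π/4 + x) :=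
    Real.sin_pos_of_pos_of_lt_pi (by linarith) (by linarith)
  have hB : 0 < Real.cos (π/8 - x) := Real.cos_pos_of_mem_Ioo ⟨by linarith, by linarith⟩
  have hD : D < 0 := by
    show Real.sin (5*π/4 + x) * Real.sin (5*π/8 - x) < 0
    rw [e1, e4]
    exact mul_neg_of_neg_of_pos (by linarith) hB
  have hD2 : 0 < D^2 := by rw [sq]; exact mul_pos_of_neg_of_neg hD hD
  have hAne : Real.sin (5*π/4 + x) ≠ 0 := by rw [e1]; exact neg_ne_zero.mpr (ne_of_gt hA)
  have hBne : Real.sin (5*π/8 - x) ≠ 0 := by rw [e4]; exact ne_of_gt hB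
  -- key inequality on numerators
  have key : Real.sin (5*π/8 + x) * Real.sin (5*π/4 - x) * D ≤
      (Real.sin (5*π/4) * Real.sin (5*π/8 + x))^2 := by
    show Real.sin (5*π/8 + x) * Real.sin (5*π/4 - x) *
        (Real.sin (5*π/4 + x) * Real.sin (5*π/8 - x)) ≤ _
    rw [e1, e2, e3, e4, e5, Real.sin_add, Real.sin_sub, Real.cos_add, Real.cos_sub,
      Real.sin_pi_div_four, Real.cos_pi_div_four]
    rw [Real.sin_sub] at hsx
    rw [Real.cos_add] at hcp
    have hsq : Real.sqrt 2 ^ 2 = 2 := Real.sq_sqrt (by norm_num)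
    have hpyth : Real.sin x ^ 2 + Real.cos x ^ 2 = 1 := Real.sin_sq_add_cos_sq x
    nlinarith [mul_nonneg (mul_nonneg (mul_pos hs hc).le hcp.le) hsx,
      sq_nonneg (Real.cos (π/8) * Real.cos x - Real.sin (π/8) * Real.sin x),
      hpyth, hsq, mul_pos hs hc]
  -- conclude
  have heq : u₁^2 - w₁ = ((Real.sin (5*π/4) * Real.sin (5*π/8 + x))^2 -
      Real.sin (5*π/8 + x) * Real.sin (5*π/4 - x) * D) / D^2 := by
    show (Real.sin (5*π/4) * Real.sin (5*π/8 + x) / D)^2 -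
        Real.sin (5*π/8 + x) * Real.sin (5*π/4 - x) / D = _
    have hDne : D ≠ 0 := ne_of_lt hD
    field_simp
  have : 0 ≤ u₁^2 - w₁ := by
    rw [heq]
    exact div_nonneg (by linarith) hD2.le
  linarith
end

section
/- For every θ ∈ [π/3, 2π/3], the weights of Theorem 1 satisfy u₂(θ)² ≥ w₂(θ). -/
open Real

lemma aux_div_sq (A B d : ℝ) (hd : d ≠ 0) (h : B*d ≤ A^2) : (A/d)^2 ≥ B/d := by
  have hd2 : 0 < d^2 := lt_of_le_of_ne (sq_nonneg d) (Ne.symm (pow_ne_zero 2 hd))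
  have h1 : B/d = B*d/d^2 := by field_simp
  rw [ge_iff_le, h1, div_pow]
  gcongr

theorem stmt_6 (θ : ℝ) (hθ : θ ∈ Set.Icc (π/3) (2*π/3)) :
    let D : ℝ := Real.sin (5*π/4 + 3*θ/8) * Real.sin (5*π/8 - 3*θ/8)
    let u₂ : ℝ := Real.sin (5*π/4) * Real.sin (3*θ/8) / D
    let w₂ : ℝ := Real.sin (15*π/8 + 3*θ/8) * Real.sin (-(3*θ/8)) / D
    u₂^2 ≥ w₂ := by
  obtain ⟨hθ1, hθ2⟩ := hθ
  have hπ : (0:ℝ) < π := Real.pi_pos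
  have hx1 : π/8 ≤ 3*θ/8 := by linarith
  have hx2 : 3*θ/8 ≤ π/4 := by linarith
  set s : ℝ := Real.sin (3*θ/8) with hsdef
  set c : ℝ := Real.cos (3*θ/8) with hcdef
  set p : ℝ := Real.sin (π/8) with hpdef
  set q : ℝ := Real.cos (π/8) with hqdef
  set r : ℝ := Real.sqrt 2 with hrdef
  have hr2 : r^2 = 2 := Real.sq_sqrt (by norm_num)
  have hrpos : 0 < r := Real.sqrt_pos.mpr (by norm_num)
  have hpy : s^2 + c^2 = 1 := Real.sin_sq_add_cos_sq _
  have hs0 : 0 ≤ s := Real.sin_nonneg_of_nonneg_of_le_pi (by linarith) (by linarith)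
  have hc0 : 0 < c := Real.cos_pos_of_mem_Ioo ⟨by linarith, by linarith⟩
  have hp0 : 0 < p := Real.sin_pos_of_pos_of_lt_pi (by linarith) (by linarith)
  have hq0 : 0 < q := Real.cos_pos_of_mem_Ioo ⟨by linarith, by linarith⟩
  have hpq : p*q = r/4 := by
    have h := Real.sin_two_mul (π/8)
    have h2 : 2*(π/8) = π/4 := by ring
    rw [h2, Real.sin_pi_div_four] at h
    rw [← hpdef, ← hqdef] at h
    linarith
  have hqp : q^2 - p^2 = r/2 := by
    have h := Real.cos_two_mul' (π/8)
    have h2 : 2*(π/8) = π/4 := by ring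
    rw [h2, Real.cos_pi_div_four] at h
    rw [← hpdef, ← hqdef] at h
    linarith
  have hsc : s ≤ c := by
    have h : (3*θ/8 + π/4) ∈ Set.Icc (-(π/2)) (π/2) := ⟨by linarith, by linarith⟩
    have h2 := Real.cos_nonneg_of_mem_Icc h
    rw [Real.cos_add, Real.cos_pi_div_four, Real.sin_pi_div_four] at h2
    rw [← hsdef, ← hcdef, ← hrdef] at h2
    nlinarith [hrpos, hr2]
  have e1 : Real.sin (5*π/4 + 3*θ/8) = -(r/2*(c+s)) := by
    have h : 5*π/4 + 3*θ/8 = (π + π/4) + 3*θ/8 := by ring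
    rw [h, Real.sin_add, Real.sin_add, Real.cos_add, Real.sin_pi, Real.cos_pi,
      Real.sin_pi_div_four, Real.cos_pi_div_four]
    rw [← hsdef, ← hcdef, ← hrdef]
    ring
  have e2 : Real.sin (5*π/8 - 3*θ/8) = q*c + p*s := by
    have h : 5*π/8 - 3*θ/8 = π/2 + (π/8 - 3*θ/8) := by ring
    rw [h, Real.sin_add, Real.sin_pi_div_two, Real.cos_pi_div_two, Real.cos_sub, Real.sin_sub]
    rw [← hsdef, ← hcdef, ← hpdef, ← hqdef]
    ring
  have e3 : Real.sin (15*π/8 + 3*θ/8) = s*q - c*p := by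
    have h : 15*π/8 + 3*θ/8 = 2*π + (3*θ/8 - π/8) := by ring
    rw [h, Real.sin_add, Real.sin_two_pi, Real.cos_two_pi, Real.sin_sub]
    rw [← hsdef, ← hcdef, ← hpdef, ← hqdef]
    ring
  have e4 : Real.sin (5*π/4) = -(r/2) := by
    have h : 5*π/4 = π + π/4 := by ring
    rw [h, Real.sin_add, Real.sin_pi, Real.cos_pi, Real.sin_pi_div_four, ← hrdef]
    ring
  show (Real.sin (5*π/4) * s / (Real.sin (5*π/4 + 3*θ/8) * Real.sin (5*π/8 - 3*θ/8)))^2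
      ≥ Real.sin (15*π/8 + 3*θ/8) * Real.sin (-(3*θ/8)) /
        (Real.sin (5*π/4 + 3*θ/8) * Real.sin (5*π/8 - 3*θ/8))
  rw [e1, e2, e3, e4, Real.sin_neg, ← hsdef]
  have hdneg : -(r/2*(c+s)) * (q*c + p*s) < 0 := by
    apply mul_neg_of_neg_of_pos
    · nlinarith [hrpos, hc0, hs0]
    · exact add_pos_of_pos_of_nonneg (mul_pos hq0 hc0) (mul_nonneg hp0.le hs0)
  apply aux_div_sq _ _ _ (ne_of_lt hdneg)
  have hfac : 0 ≤ c^2 + 2*s*c - s^2 := by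
    nlinarith [mul_nonneg (sub_nonneg.2 hsc) (add_nonneg hc0.le hs0), mul_nonneg hs0 hc0.le]
  have hnn : 0 ≤ (s/4)*(c-s)*(c^2 + 2*s*c - s^2) :=
    mul_nonneg (mul_nonneg (by linarith) (sub_nonneg.2 hsc)) hfac
  have iden : (-(r/2)*s)^2 - ((s*q - c*p) * -s) * (-(r/2*(c+s)) * (q*c + p*s))
      = (s/4)*(c-s)*(c^2 + 2*s*c - s^2) := by
    linear_combination (-(r/2)*s*(c+s)*(s^2-c^2))*hpq + (-(r/2)*s*(c+s)*s*c)*hqp +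
      (s^2/4 - s*(c+s)*s*c/4 - s*(c+s)*(s^2-c^2)/8)*hr2 + (-(s^2/2))*hpy
  linarith [iden, hnn]
end

section
/- For θ = π/3 and any real s with t ≠ 0, the O(n) model weights satisfy w₂ = 0 and u₂ = v = w₁ = u₁², where u₁ = ±1/√(2±√(2−n)) with n = −2cos(4πs/3). -/
open Real

theorem stmt_9 (s : ℝ) :
    let θ : ℝ := π/3
    let n : ℝ := -2 * Real.cos (4*π*s/3)
    let t : ℝ := (Real.sin (2*π*s/3))^3 / Real.sin (π*s/3) +
      Real.sin ((θ - π/3)*s) * Real.sin ((2*π/3 - θ)*s)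
    let u₁ : ℝ := Real.sin ((π - θ)*s) * Real.sin (2*π*s/3) / t
    let u₂ : ℝ := Real.sin (θ*s) * Real.sin (2*π*s/3) / t
    let v : ℝ := Real.sin (θ*s) * Real.sin ((π - θ)*s) / t
    let w₁ : ℝ := Real.sin ((2*π/3 - θ)*s) * Real.sin ((π - θ)*s) / t
    let w₂ : ℝ := Real.sin ((θ - π/3)*s) * Real.sin (θ*s) / t
    t ≠ 0 →
      w₂ = 0 ∧ u₂ = u₁^2 ∧ v = u₁^2 ∧ w₁ = u₁^2 ∧
      2 - n = (1 / u₁^2 - 2)^2 := by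
  intro θ n t u₁ u₂ v w₁ w₂ ht
  simp only [θ, n, t, u₁, u₂, v, w₁, w₂] at ht ⊢
  rw [show (π/3 - π/3)*s = 0 by ring, show (2*π/3 - π/3)*s = π*s/3 by ring] at ht
  rw [show (π/3 - π/3)*s = 0 by ring, show (2*π/3 - π/3)*s = π*s/3 by ring,
    show (π - π/3)*s = 2*π*s/3 by ring, show (π/3)*s = π*s/3 by ring]
  simp only [Real.sin_zero, zero_mul, mul_zero, add_zero] at ht ⊢
  have h2 : Real.sin (2*π*s/3) = 2 * Real.sin (π*s/3) * Real.cos (π*s/3) := by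
    rw [show (2*π*s/3 : ℝ) = 2*(π*s/3) by ring, Real.sin_two_mul]
  have h4 : Real.cos (4*π*s/3) = 2 * (Real.cos (2*π*s/3))^2 - 1 := by
    rw [show (4*π*s/3 : ℝ) = 2*(2*π*s/3) by ring, Real.cos_two_mul]
  have h2c : Real.cos (2*π*s/3) = 1 - 2 * (Real.sin (π*s/3))^2 := by
    rw [show (2*π*s/3 : ℝ) = 2*(π*s/3) by ring, Real.cos_two_mul]
    nlinarith [Real.sin_sq_add_cos_sq (π*s/3)]
  have hS : Real.sin (π*s/3) ≠ 0 := by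
    intro h
    apply ht
    rw [h2, h]
    simp
  have hC : Real.cos (π*s/3) ≠ 0 := by
    intro h
    apply ht
    rw [h2, h]
    simp
  have hpyth := Real.sin_sq_add_cos_sq (π*s/3)
  rw [h2] at ht ⊢
  set S := Real.sin (π*s/3) with hSdef
  set C := Real.cos (π*s/3) with hCdef
  have hT : (2*S*C)^3 / S = 8*S^2*C^3 := by
    field_simp
    ring
  rw [hT] at ht ⊢
  have hC2 : C^2 = 1 - S^2 := by linarith [hpyth]
  refine ⟨by simp, ?_, ?_, ?_, ?_⟩
  · field_simp
    ring
  · field_simp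
    ring
  · field_simp
    ring
  · rw [h4, h2c]
    have hu : (2*S*C*(2*S*C)/(8*S^2*C^3))^2 = 1/(4*C^2) := by
      field_simp
      ring
    rw [hu, one_div_one_div, hC2]
    ring
end

section
/- Suppose complex numbers λ = e^{−iσθ}, μ = e^{−iσπ} with σ, θ real, and real weights u₁,u₂,v,w₁,w₂ with v ≠ 0 satisfy the four local equations (i) 1 + λμ̄e^{iθ}u₂ − v − λe^{iθ}u₁ = 0, (ii) λμ̄²e^{iθ}v − μu₂ − λe^{iθ}w₂ = 0, (iii) −λμe^{iθ}v − μ̄u₁ + λμ̄e^{iθ}w₁ = 0, (iv) −λμe^{iθ}u₂ − μ²w₂ + λμ̄²e^{iθ}u₁ − μ̄²w₁ = 0, together with the equations obtained from (i)–(iv) by conjugating all terms except the real weights. Then cos(4σπ) = 0. -/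
open Complex

theorem stmt_10 (σ θ : ℝ) (u₁ u₂ v w₁ w₂ : ℝ) (hv : v ≠ 0)
    (l m e : ℂ)
    (hl : l = Complex.exp (-(σ*θ) * Complex.I))
    (hm : m = Complex.exp (-(σ*Real.pi) * Complex.I))
    (he : e = Complex.exp ((θ:ℂ) * Complex.I))
    (h1 : 1 + l * (starRingEnd ℂ) m * e * (u₂:ℂ) - (v:ℂ) - l * e * (u₁:ℂ) = 0)
    (h2 : l * ((starRingEnd ℂ) m)^2 * e * (v:ℂ) - m * (u₂:ℂ) - l * e * (w₂:ℂ) = 0)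
    (h3 : -(l * m * e * (v:ℂ)) - (starRingEnd ℂ) m * (u₁:ℂ)
      + l * (starRingEnd ℂ) m * e * (w₁:ℂ) = 0)
    (h4 : -(l * m * e * (u₂:ℂ)) - m^2 * (w₂:ℂ)
      + l * ((starRingEnd ℂ) m)^2 * e * (u₁:ℂ) - ((starRingEnd ℂ) m)^2 * (w₁:ℂ) = 0)
    (h1c : 1 + (starRingEnd ℂ) l * m * (starRingEnd ℂ) e * (u₂:ℂ) - (v:ℂ)
      - (starRingEnd ℂ) l * (starRingEnd ℂ) e * (u₁:ℂ) = 0)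
    (h2c : (starRingEnd ℂ) l * m^2 * (starRingEnd ℂ) e * (v:ℂ)
      - (starRingEnd ℂ) m * (u₂:ℂ) - (starRingEnd ℂ) l * (starRingEnd ℂ) e * (w₂:ℂ) = 0)
    (h3c : -((starRingEnd ℂ) l * (starRingEnd ℂ) m * (starRingEnd ℂ) e * (v:ℂ))
      - m * (u₁:ℂ) + (starRingEnd ℂ) l * m * (starRingEnd ℂ) e * (w₁:ℂ) = 0)
    (h4c : -((starRingEnd ℂ) l * (starRingEnd ℂ) m * (starRingEnd ℂ) e * (u₂:ℂ))
      - ((starRingEnd ℂ) m)^2 * (w₂:ℂ) + (starRingEnd ℂ) l * m^2 * (starRingEnd ℂ) e * (u₁:ℂ)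
      - m^2 * (w₁:ℂ) = 0) :
    Real.cos (4*σ*Real.pi) = 0 := by
  set L := (starRingEnd ℂ) l with hLdef
  set M := (starRingEnd ℂ) m with hMdef
  set E := (starRingEnd ℂ) e with hEdef
  have hL : l * L = 1 := by
    rw [hLdef, hl, ← Complex.exp_conj, ← Complex.exp_add]; simp
  have hM : m * M = 1 := by
    rw [hMdef, hm, ← Complex.exp_conj, ← Complex.exp_add]; simp
  have hE : e * E = 1 := by
    rw [hEdef, he, ← Complex.exp_conj, ← Complex.exp_add]; simp
  have key : (m^4 + M^4) * (v:ℂ) = 0 := by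
    linear_combination l*e*m^2*h2c - l*e*M^3*h3c - h4
      - (e*E*((m^4+M^4)*(v:ℂ) - m^2*(w₂:ℂ) - m*M*M^2*(w₁:ℂ)))*hL
      - (((m^4+M^4)*(v:ℂ) - m^2*(w₂:ℂ) - m*M*M^2*(w₁:ℂ)))*hE
      - ((-(l*e*m*(u₂:ℂ)) + l*e*M^2*(u₁:ℂ) - M^2*(w₁:ℂ)))*hM
  have hvC : (v:ℂ) ≠ 0 := by exact_mod_cast hv
  have hsum : m^4 + M^4 = 0 := by
    rcases mul_eq_zero.mp key with h | h
    · exact h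
    · exact absurd h hvC
  -- m^4 = exp(-(4σπ) I), M^4 = conj (m^4)
  have hm4 : m^4 = Complex.exp ((-(4*σ*Real.pi) : ℝ) * Complex.I) := by
    rw [hm, ← Complex.exp_nat_mul]
    congr 1
    push_cast
    ring
  have hre : (m^4).re = Real.cos (4*σ*Real.pi) := by
    rw [hm4, Complex.exp_ofReal_mul_I_re, Real.cos_neg]
  have : (m^4).re = 0 := by
    have hM4 : M^4 = (starRingEnd ℂ) (m^4) := by rw [hMdef, map_pow]
    have h := congrArg Complex.re hsum
    rw [hM4, Complex.add_re, Complex.conj_re, Complex.zero_re] at h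
    linarith
  rw [← hre, this]
end

section
/- If v = 0 and the local equations reduce to u₁ = λe^{iθ}w₁, u₂ = −λμ̄e^{iθ}w₂, w₁ + w₂ = 1, with real u₁, u₂, w₁, w₂ not all vanishing appropriately (w₁ ≠ 0 or w₂ ≠ 0), and these hold together with their conjugates for all θ in a nonempty open interval, then σ = 1 (mod the obvious periodicity), and in that case u₁ = w₁, u₂ = w₂, and u₁ + u₂ = 1. -/
open Complex

-- helper: extract real relation from equality of unit exponentials
lemma exp_real_eq (x y : ℝ) (h : Complex.exp ((x:ℂ)*Complex.I) = Complex.exp ((y:ℂ)*Complex.I)) :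
    ∃ n : ℤ, x = y + n*(2*Real.pi) := by
  rw [Complex.exp_eq_exp_iff_exists_int] at h
  obtain ⟨n, hn⟩ := h
  refine ⟨n, ?_⟩
  have h2 : (x : ℂ) * Complex.I = (↑y + ↑n * (2 * ↑Real.pi)) * Complex.I := by
    rw [hn]; ring
  have h3 : (x : ℂ) = (↑y + ↑n * (2 * ↑Real.pi)) :=
    mul_right_cancel₀ Complex.I_ne_zero h2
  exact_mod_cast h3

lemma aux_c_zero (c d a b : ℝ) (hab : a < b)
    (h : ∀ θ ∈ Set.Ioo a b, ∃ n : ℤ, c*θ + d = n*(2*Real.pi)) : c = 0 := by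
  by_contra hc
  have hπ := Real.pi_pos
  set t := min ((b-a)/2) (Real.pi/|c|) with ht
  have ht0 : 0 < t := lt_min (by linarith) (div_pos hπ (abs_pos.mpr hc))
  have ht1 : t ≤ (b-a)/2 := min_le_left _ _
  have ht2 : t ≤ Real.pi/|c| := min_le_right _ _
  have h1 : a + t/2 ∈ Set.Ioo a b := ⟨by linarith, by linarith⟩
  have h2 : a + t ∈ Set.Ioo a b := ⟨by linarith, by linarith⟩
  obtain ⟨n₁, e₁⟩ := h _ h1
  obtain ⟨n₂, e₂⟩ := h _ h2
  have key : c * (t/2) = (n₂ - n₁ : ℤ) * (2*Real.pi) := by push_cast; nlinarith [e₁, e₂]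
  have habs : |c * (t/2)| ≤ Real.pi/2 := by
    rw [abs_mul, abs_of_pos (by linarith : (0:ℝ) < t/2)]
    have : |c| * t ≤ |c| * (Real.pi/|c|) := by
      exact mul_le_mul_of_nonneg_left ht2 (abs_nonneg c)
    rw [mul_div_cancel₀ _ (abs_ne_zero.mpr hc)] at this
    linarith
  rcases eq_or_ne n₂ n₁ with he | he
  · rw [he, sub_self] at key
    simp at key
    rcases key with k | k
    · exact hc k
    · linarith
  · have : (1:ℝ) ≤ |(n₂ - n₁ : ℤ)| := by
      have : (1:ℤ) ≤ |n₂ - n₁| := Int.one_le_abs (sub_ne_zero.mpr he)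
      exact_mod_cast this
    have : 2*Real.pi ≤ |((n₂ - n₁ : ℤ) : ℝ) * (2*Real.pi)| := by
      rw [abs_mul, abs_of_pos (by linarith : (0:ℝ) < 2*Real.pi)]
      push_cast at this ⊢
      nlinarith
    rw [← key] at this
    linarith

theorem stmt_12 (σ : ℝ) (u₁ u₂ w₁ w₂ : ℝ) (a b : ℝ) (hab : a < b)
    (hw : w₁ ≠ 0 ∨ w₂ ≠ 0)
    (h : ∀ θ ∈ Set.Ioo a b,
      ((u₁:ℂ) = Complex.exp (-(σ*θ) * Complex.I) * Complex.exp ((θ:ℂ) * Complex.I) * (w₁:ℂ)) ∧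
      ((u₂:ℂ) = -(Complex.exp (-(σ*θ) * Complex.I)
          * (starRingEnd ℂ) (Complex.exp (-(σ*Real.pi) * Complex.I))
          * Complex.exp ((θ:ℂ) * Complex.I) * (w₂:ℂ))) ∧
      (w₁ + w₂ = 1) ∧
      ((u₁:ℂ) = (starRingEnd ℂ) (Complex.exp (-(σ*θ) * Complex.I))
          * (starRingEnd ℂ) (Complex.exp ((θ:ℂ) * Complex.I)) * (w₁:ℂ)) ∧
      ((u₂:ℂ) = -((starRingEnd ℂ) (Complex.exp (-(σ*θ) * Complex.I))
          * Complex.exp (-(σ*Real.pi) * Complex.I)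
          * (starRingEnd ℂ) (Complex.exp ((θ:ℂ) * Complex.I)) * (w₂:ℂ)))) :
    σ = 1 ∧ u₁ = w₁ ∧ u₂ = w₂ ∧ u₁ + u₂ = 1 := by
  -- conjugate simplifications
  have conj1 : ∀ θ : ℝ, (starRingEnd ℂ) (Complex.exp (-(σ*θ) * Complex.I))
      = Complex.exp (((σ*θ:ℝ):ℂ) * Complex.I) := by
    intro θ
    rw [← Complex.exp_conj]
    congr 1
    simp [map_mul, Complex.conj_I]
  have conj2 : ∀ θ : ℝ, (starRingEnd ℂ) (Complex.exp ((θ:ℂ) * Complex.I))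
      = Complex.exp ((-θ:ℝ) * Complex.I) := by
    intro θ
    rw [← Complex.exp_conj]
    congr 1
    simp [map_mul, Complex.conj_I]
  have hσ : σ = 1 := by
    rcases hw with hw1 | hw2
    · have hc : 2*(1-σ) = 0 := by
        apply aux_c_zero (2*(1-σ)) 0 a b hab
        intro θ hθ
        obtain ⟨e1, -, -, e4, -⟩ := h θ hθ
        rw [conj1, conj2] at e4
        have hwne : (w₁:ℂ) ≠ 0 := Complex.ofReal_ne_zero.mpr hw1
        have hmul := mul_right_cancel₀ hwne (e1.symm.trans e4)
        have hexp : Complex.exp (((θ - σ*θ : ℝ):ℂ)*Complex.I)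
            = Complex.exp (((σ*θ - θ : ℝ):ℂ)*Complex.I) := by
          calc Complex.exp (((θ - σ*θ : ℝ):ℂ)*Complex.I)
              = Complex.exp (-(σ*θ) * Complex.I) * Complex.exp ((θ:ℂ) * Complex.I) := by
                rw [← Complex.exp_add]; push_cast; ring_nf
            _ = Complex.exp (((σ*θ:ℝ):ℂ) * Complex.I) * Complex.exp (((-θ:ℝ):ℂ)*Complex.I) := hmul
            _ = Complex.exp (((σ*θ - θ : ℝ):ℂ)*Complex.I) := by
                rw [← Complex.exp_add]; push_cast; ring_nf
        obtain ⟨n, hn⟩ := exp_real_eq _ _ hexp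
        exact ⟨n, by linarith⟩
      linarith
    · have hc : 2*(1-σ) = 0 := by
        apply aux_c_zero (2*(1-σ)) (2*σ*Real.pi) a b hab
        intro θ hθ
        obtain ⟨-, e2, -, -, e5⟩ := h θ hθ
        rw [conj1] at e2; rw [conj1, conj2] at e5
        have hwne : (w₂:ℂ) ≠ 0 := Complex.ofReal_ne_zero.mpr hw2
        have hmul : Complex.exp (-(σ*θ) * Complex.I)
              * Complex.exp (((σ*Real.pi:ℝ):ℂ) * Complex.I) * Complex.exp ((θ:ℂ) * Complex.I)
            = Complex.exp (((σ*θ:ℝ):ℂ) * Complex.I) * Complex.exp (-(σ*Real.pi) * Complex.I)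
              * Complex.exp (((-θ:ℝ):ℂ)*Complex.I) := by
          apply mul_right_cancel₀ hwne
          have := e2.symm.trans e5
          have h2 := neg_injective this
          linear_combination h2
        have hexp : Complex.exp (((θ - σ*θ + σ*Real.pi : ℝ):ℂ)*Complex.I)
            = Complex.exp (((σ*θ - σ*Real.pi - θ : ℝ):ℂ)*Complex.I) := by
          calc Complex.exp (((θ - σ*θ + σ*Real.pi : ℝ):ℂ)*Complex.I)
              = Complex.exp (-(σ*θ) * Complex.I)
                * Complex.exp (((σ*Real.pi:ℝ):ℂ) * Complex.I)
                * Complex.exp ((θ:ℂ) * Complex.I) := by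
                rw [← Complex.exp_add, ← Complex.exp_add]; push_cast; ring_nf
            _ = _ := hmul
            _ = Complex.exp (((σ*θ - σ*Real.pi - θ : ℝ):ℂ)*Complex.I) := by
                rw [← Complex.exp_add, ← Complex.exp_add]; push_cast; ring_nf
        obtain ⟨n, hn⟩ := exp_real_eq _ _ hexp
        exact ⟨n, by linarith⟩
      linarith
  subst hσ
  set θ₀ := (a+b)/2 with hθ₀def
  have hθ₀ : θ₀ ∈ Set.Ioo a b := ⟨by simp [hθ₀def]; linarith, by simp [hθ₀def]; linarith⟩
  obtain ⟨e1, e2, e3, -, -⟩ := h θ₀ hθ₀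
  rw [conj1] at e2
  have hEF : Complex.exp (-((1:ℝ)*θ₀) * Complex.I) * Complex.exp ((θ₀:ℂ) * Complex.I) = 1 := by
    rw [← Complex.exp_add]
    have : (-((1:ℝ)*θ₀) * Complex.I + (θ₀:ℂ) * Complex.I) = 0 := by push_cast; ring
    rw [this, Complex.exp_zero]
  have hpi : Complex.exp ((((1:ℝ)*Real.pi:ℝ):ℂ) * Complex.I) = -1 := by
    push_cast
    rw [one_mul]
    exact Complex.exp_pi_mul_I
  have hu1 : u₁ = w₁ := by
    rw [hEF, one_mul] at e1
    exact_mod_cast e1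
  have hu2 : u₂ = w₂ := by
    rw [hpi] at e2
    have : (u₂:ℂ) = (w₂:ℂ) := by
      rw [e2]
      have := hEF
      linear_combination (w₂:ℂ) * hEF
    exact_mod_cast this
  exact ⟨rfl, hu1, hu2, by linarith⟩
end

section
/- Let c > 0 and let (B_T)_{T≥1} be a sequence of positive reals satisfying (c_α/(x_c u₂))·B_{T+1}² + B_{T+1} ≥ B_T for all T ≥ 1, where c = x_c u₂/c_α. Then B_T ≥ min(B₁, c)/T for all T ≥ 1. -/
theorem stmt_13 (cα xc u₂ : ℝ) (hcα : 0 < cα) (hxc : 0 < xc) (hu₂ : 0 < u₂)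
    (B : ℕ → ℝ) (hpos : ∀ T, 1 ≤ T → 0 < B T)
    (hrec : ∀ T, 1 ≤ T → cα / (xc * u₂) * (B (T+1))^2 + B (T+1) ≥ B T) :
    ∀ T, 1 ≤ T → B T ≥ min (B 1) (xc * u₂ / cα) / T := by
  set a := cα / (xc * u₂) with ha_def
  set c := xc * u₂ / cα with hc_def
  have ha : 0 < a := div_pos hcα (mul_pos hxc hu₂)
  have hc : 0 < c := div_pos (mul_pos hxc hu₂) hcα
  have hac : a * c = 1 := by
    rw [ha_def, hc_def, div_mul_div_comm, mul_comm cα, div_self (mul_pos (mul_pos hxc hu₂) hcα).ne']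
  set m := min (B 1) c with hm_def
  have hm : 0 < m := lt_min (hpos 1 le_rfl) hc
  have hmc : m ≤ c := min_le_right _ _
  intro T hT
  induction T, hT using Nat.le_induction with
  | base =>
    simp only [Nat.cast_one, div_one]
    exact min_le_left (B 1) c
  | succ n hn ih =>
    by_contra hcon
    push_neg at hcon
    set x := B (n + 1) with hx_def
    have hx : 0 < x := hpos _ (by omega)
    have hN : (1 : ℝ) ≤ (n : ℝ) := by exact_mod_cast hn
    have hN1 : (0 : ℝ) < (n : ℝ) + 1 := by linarith
    have hNc : ((n + 1 : ℕ) : ℝ) = (n : ℝ) + 1 := by push_cast; ring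
    rw [hNc] at hcon
    have hxm : x * ((n : ℝ) + 1) < m := (lt_div_iff₀ hN1).mp hcon
    have hmN : m ≤ B n * (n : ℝ) := by
      have := (div_le_iff₀ (by linarith : (0:ℝ) < (n:ℝ))).mp ih
      linarith
    have hrec' : a * x ^ 2 + x ≥ B n := hrec n hn
    nlinarith [mul_pos ha hx, mul_pos hx hx, mul_pos hm hx, mul_lt_mul_of_pos_left hxm hc,
      mul_le_mul_of_nonneg_left hmN (le_of_lt hc), mul_pos hc hx,
      mul_le_mul_of_nonneg_right hrec' (le_of_lt (mul_pos hc (lt_of_lt_of_le one_pos hN)))]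
end

section
/- If (B_T)_{T≥1} is a sequence of positive reals with B_{T+1}²/c + B_{T+1} ≥ B_T for fixed c > 0, then the series ∑_T B_T diverges, provided B₁ > 0. -/
theorem stmt_14 (c : ℝ) (hc : 0 < c)
    (B : ℕ → ℝ) (hpos : ∀ T, 1 ≤ T → 0 < B T) (hB1 : 0 < B 1)
    (hrec : ∀ T, 1 ≤ T → (B (T+1))^2 / c + B (T+1) ≥ B T) :
    ¬ Summable B := by
  intro hsum
  set m := min (B 1) c with hm
  have hm0 : 0 < m := lt_min hB1 hc
  have hmc : m ≤ c := min_le_right _ _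
  have key : ∀ T : ℕ, 1 ≤ T → m / T ≤ B T := by
    intro T hT
    induction T with
    | zero => omega
    | succ n ih =>
      rcases Nat.lt_or_ge 1 (n+1) with h | h
      · have hn : 1 ≤ n := by omega
        have hBn := ih hn
        by_contra hlt
        push_neg at hlt
        have hx : 0 < B (n+1) := hpos _ (by omega)
        have hr := hrec n hn
        set x := B (n+1) with hxdef
        have hN : (1:ℝ) ≤ (n:ℝ) := by exact_mod_cast hn
        have hN1 : (0:ℝ) < (n:ℝ) + 1 := by linarith
        have hcast : ((n+1 : ℕ) : ℝ) = (n:ℝ) + 1 := by push_cast; ring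
        rw [hcast] at hlt
        have h1 : x * ((n:ℝ)+1) < m := (lt_div_iff₀ hN1).mp hlt
        have h2 : m ≤ B n * n := by
          have := (div_le_iff₀ (by linarith : (0:ℝ) < (n:ℝ))).mp hBn
          linarith
        have h3 : x^2 + c * x ≥ c * B n := by
          have := mul_le_mul_of_nonneg_right hr (le_of_lt hc)
          have hcx : (x^2 / c + x) * c = x^2 + c * x := by field_simp
          linarith [hcx ▸ this]
        nlinarith [mul_pos hx hm0, sq_nonneg (x*((n:ℝ)+1) - m), mul_pos hm0 hm0,
          mul_lt_mul_of_pos_left h1 hx, mul_le_mul_of_nonneg_left h2 (le_of_lt hc),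
          mul_le_mul_of_nonneg_right h3 (le_of_lt hN1), mul_pos hN1 hN1]
      · have hn1 : n + 1 = 1 := by omega
        rw [hn1]
        simp only [Nat.cast_one, div_one]
        exact min_le_left (B 1) c
  have h2 : Summable (fun n : ℕ => B (n+1)) := (summable_nat_add_iff 1).mpr hsum
  have h3 : Summable (fun n : ℕ => m / ((n:ℝ)+1)) := by
    apply Summable.of_nonneg_of_le (fun n => by positivity) _ h2
    intro n
    have := key (n+1) (by omega)
    have hcast : ((n+1 : ℕ) : ℝ) = (n:ℝ) + 1 := by push_cast; ring
    rwa [hcast] at this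
  have h4 : Summable (fun n : ℕ => 1 / ((n:ℝ)+1)) := by
    have := h3.mul_left (1/m)
    convert this using 2 with n
    · rfl
    field_simp
  have h5 : Summable (fun n : ℕ => 1 / ((n:ℝ))) := by
    rw [← summable_nat_add_iff 1]
    convert h4 using 2 with n
    · rfl
    push_cast; ring
  exact Real.not_summable_one_div_natCast h5
end
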